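/- For vectors x, y in ℝⁿ all of whose components lie in {-1, 0, 1}, and for any 1 < p < ∞, x is Birkhoff-James orthogonal to y in l^n_p if and only if x and y are orthogonal in the Euclidean sense (their standard dot product is zero). -/

import Mathlib

open Finset Filter

/-- The `p`-norm on `ℝⁿ`. -/
noncomputable def pnorm (p : ℝ) {n : ℕ} (x : Fin n → ℝ) : ℝ :=
  (∑ j, |x j| ^ p) ^ (1 / p)

/-- Birkhoff-James orthogonality in `l^n_p`. -/
def BJOrth (p : ℝ) {n : ℕ} (x y : Fin n → ℝ) : Prop :=
  ∀ l : ℝ, pnorm p x ≤ pnorm p (x + l • y)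

/-- derivative of `|t|^p` at 0 is 0 for `p > 1`. -/
private lemma key1 {p : ℝ} (hp : 1 < p) : HasDerivAt (fun t : ℝ => |t| ^ p) 0 0 := by
  rw [hasDerivAt_iff_tendsto_slope]
  apply squeeze_zero_norm' (a := fun t : ℝ => |t| ^ (p - 1))
  · filter_upwards [self_mem_nhdsWithin] with t ht
    have ht0 : t ≠ 0 := ht
    have habs : (0:ℝ) < |t| := abs_pos.mpr ht0
    rw [slope_def_field]
    simp only [sub_zero, abs_zero]
    rw [Real.zero_rpow (by positivity), sub_zero, div_eq_mul_inv]
    rw [Real.norm_eq_abs, abs_mul, abs_inv]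
    rw [abs_of_nonneg (Real.rpow_nonneg (abs_nonneg t) p)]
    rw [← Real.rpow_neg_one |t|, ← Real.rpow_add habs]
    exact le_of_eq (by ring_nf)
  · have hc : ContinuousAt (fun t : ℝ => |t| ^ (p - 1)) 0 :=
      continuous_abs.continuousAt.rpow_const (Or.inr (by linarith))
    have := hc.continuousWithinAt (s := {(0:ℝ)}ᶜ)
    simpa [Real.zero_rpow (by linarith : p - 1 ≠ 0)] using this.tendsto

/-- derivative of `|1 + c t|^p` at 0 is `p * c`. -/
private lemma key2 {p : ℝ} (hp : 1 < p) (c : ℝ) :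
    HasDerivAt (fun t : ℝ => |1 + c * t| ^ p) (p * c) 0 := by
  have h1 : HasDerivAt (fun t : ℝ => (1 + c * t) ^ p) (p * c) 0 := by
    have inner : HasDerivAt (fun t : ℝ => 1 + c * t) c 0 := by
      simpa using ((hasDerivAt_id (0:ℝ)).const_mul c).const_add 1
    have outer := Real.hasDerivAt_rpow_const (x := 1 + c * 0) (p := p) (Or.inl (by norm_num))
    have := outer.comp 0 inner
    simpa [Function.comp_def] using this
  apply h1.congr_of_eventuallyEq
  have : ∀ᶠ t : ℝ in nhds 0, 0 < 1 + c * t := by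
    have hcont : Filter.Tendsto (fun t : ℝ => 1 + c * t) (nhds 0) (nhds 1) := by
      have : ContinuousAt (fun t : ℝ => 1 + c * t) 0 := by fun_prop
      simpa using this.tendsto
    exact hcont.eventually (eventually_gt_nhds (by norm_num : (0:ℝ) < 1))
  filter_upwards [this] with t ht
  rw [abs_of_pos ht]

/-- per-coordinate derivative. -/
private lemma key_deriv {p : ℝ} (hp : 1 < p) {a b : ℝ}
    (ha : a = -1 ∨ a = 0 ∨ a = 1) (hb : b = -1 ∨ b = 0 ∨ b = 1) :
    HasDerivAt (fun l : ℝ => |a + l * b| ^ p) (p * (a * b)) 0 := by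
  rcases ha with ha | ha | ha
  · -- a = -1 : |a + l b| = |1 + (a*b) l|
    have : (fun l : ℝ => |a + l * b| ^ p) = fun l : ℝ => |1 + (a * b) * l| ^ p := by
      funext l; subst ha; rw [show (-1 : ℝ) + l * b = -(1 + (-1 * b) * l) by ring, abs_neg]
    rw [this]; exact key2 hp _
  · subst ha
    have hd : p * (0 * b) = 0 := by ring
    rw [hd]
    rcases hb with hb | hb | hb <;> subst hb
    · have he : (fun l : ℝ => |(0:ℝ) + l * (-1:ℝ)| ^ p) = fun l : ℝ => |l| ^ p := by
        funext l; rw [zero_add, abs_mul]; norm_num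
      rw [he]; exact key1 hp
    · have he : (fun l : ℝ => |(0:ℝ) + l * (0:ℝ)| ^ p) = fun _ : ℝ => (0:ℝ) := by
        funext l; simp [Real.zero_rpow (by linarith : p ≠ 0)]
      rw [he]; exact hasDerivAt_const (0:ℝ) (0:ℝ)
    · have he : (fun l : ℝ => |(0:ℝ) + l * (1:ℝ)| ^ p) = fun l : ℝ => |l| ^ p := by
        funext l; norm_num
      rw [he]; exact key1 hp
  · have : (fun l : ℝ => |a + l * b| ^ p) = fun l : ℝ => |1 + (a * b) * l| ^ p := by
      funext l; subst ha; norm_num; ring_nf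
    rw [this]; exact key2 hp _

/-- tangent line inequality per coordinate. -/
private lemma key_tangent {p : ℝ} (hp : 1 < p) {a b : ℝ}
    (ha : a = -1 ∨ a = 0 ∨ a = 1) (l : ℝ) :
    |a| ^ p + p * (a * b) * l ≤ |a + l * b| ^ p := by
  have hber : ∀ z : ℝ, 1 + p * z ≤ |1 + z| ^ p := by
    intro z
    rcases le_or_gt (-1) z with hz | hz
    · calc 1 + p * z ≤ (1 + z) ^ p := one_add_mul_self_le_rpow_one_add hz hp.le
        _ = |1 + z| ^ p := by rw [abs_of_nonneg (by linarith)]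
    · have : p * z < p * (-1) := by
        apply mul_lt_mul_of_pos_left hz (by linarith)
      have h1 : 1 + p * z < 0 := by nlinarith
      exact le_trans h1.le (Real.rpow_nonneg (abs_nonneg _) p)
  rcases ha with ha | ha | ha
  · subst ha
    have : |(-1:ℝ) + l * b| = |1 + (-1 * b) * l| := by
      rw [show (-1 : ℝ) + l * b = -(1 + (-1 * b) * l) by ring, abs_neg]
    rw [this]
    have := hber ((-1 * b) * l)
    calc |(-1:ℝ)| ^ p + p * (-1 * b) * l = 1 + p * ((-1 * b) * l) := by
          rw [abs_neg, abs_one, Real.one_rpow]; ring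
      _ ≤ |1 + (-1 * b) * l| ^ p := this
  · subst ha
    simp only [abs_zero, Real.zero_rpow (by linarith : p ≠ 0), zero_mul, mul_zero, zero_add]
    exact Real.rpow_nonneg (abs_nonneg _) p
  · subst ha
    have : (1:ℝ) + l * b = 1 + (1 * b) * l := by ring
    rw [this]
    have := hber ((1 * b) * l)
    calc |(1:ℝ)| ^ p + p * (1 * b) * l = 1 + p * ((1 * b) * l) := by
          rw [abs_one, Real.one_rpow]; ring
      _ ≤ |1 + (1 * b) * l| ^ p := this

/-- For vectors with components in `{-1, 0, 1}` and `1 < p < ∞`, Birkhoff-James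
orthogonality in `l^n_p` coincides with Euclidean orthogonality. -/
theorem stmt6 {n : ℕ} (p : ℝ) (hp : 1 < p) (x y : Fin n → ℝ) (hx : x ≠ 0)
    (hxc : ∀ j, x j = -1 ∨ x j = 0 ∨ x j = 1) (hyc : ∀ j, y j = -1 ∨ y j = 0 ∨ y j = 1) :
    BJOrth p x y ↔ ∑ j, x j * y j = 0 := by
  have hp0 : (0:ℝ) < p := by linarith
  have hip : (0:ℝ) < 1 / p := by positivity
  set S : ℝ → ℝ := fun l => ∑ j, |x j + l * y j| ^ p with hS
  have hSnn : ∀ l, 0 ≤ S l := fun l =>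
    Finset.sum_nonneg fun j _ => Real.rpow_nonneg (abs_nonneg _) p
  have hS0 : S 0 = ∑ j, |x j| ^ p := by simp [hS]
  have hpn : ∀ l, pnorm p (x + l • y) = (S l) ^ (1 / p) := by
    intro l
    simp [pnorm, hS, Pi.add_apply, Pi.smul_apply, smul_eq_mul, mul_comm]
  have hpnx : pnorm p x = (S 0) ^ (1 / p) := by simp [pnorm, hS0]
  have hBJ : BJOrth p x y ↔ ∀ l, S 0 ≤ S l := by
    unfold BJOrth
    constructor
    · intro h l
      have := h l
      rw [hpnx, hpn] at this
      exact (Real.rpow_le_rpow_iff (hSnn 0) (hSnn l) hip).mp this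
    · intro h l
      rw [hpnx, hpn]
      exact Real.rpow_le_rpow (hSnn 0) (h l) hip.le
  rw [hBJ]
  constructor
  · intro h
    have hderiv : HasDerivAt S (p * ∑ j, x j * y j) 0 := by
      rw [Finset.mul_sum]
      exact HasDerivAt.fun_sum fun j _ => key_deriv hp (hxc j) (hyc j)
    have hmin : IsLocalMin S 0 := Filter.Eventually.of_forall h
    have := hmin.hasDerivAt_eq_zero hderiv
    have := mul_eq_zero.mp this
    rcases this with h' | h'
    · exact absurd h' (by positivity)
    · exact h'
  · intro h l
    rw [hS0]
    calc ∑ j, |x j| ^ p = ∑ j, (|x j| ^ p + p * (x j * y j) * l) := by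
          rw [Finset.sum_add_distrib]
          have : ∑ j, p * (x j * y j) * l = (p * l) * ∑ j, x j * y j := by
            rw [Finset.mul_sum]; congr 1; funext j; ring
          rw [this, h, mul_zero, add_zero]
      _ ≤ ∑ j, |x j + l * y j| ^ p :=
          Finset.sum_le_sum fun j _ => key_tangent hp (hxc j) l
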